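/- Let p be a prime divisor of n and n̂ = n/p. For any two distinct u, v in G_n(p) = {(0, n̂)} ∪ {(n̂, i·n̂) : 0 ≤ i ≤ p−1}, the subgroup ⟨u, v⟩ equals ⟨(n̂, 0), (0, n̂)⟩ and has order p². -/

import Mathlib

/-- The set of generators `G_n(p)` from the paper. -/
def Gnp (n p : ℕ) : Set (ZMod n × ZMod n) :=
  insert ((0 : ZMod n), ((n / p : ℕ) : ZMod n))
    {w | ∃ i < p, w = (((n / p : ℕ) : ZMod n), ((i * (n / p) : ℕ) : ZMod n))}

open AddSubgroup in
lemma closure_pair_prod {A B : Type*} [AddCommGroup A] [AddCommGroup B] (a : A) (b : B) :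
    closure {((a, 0) : A × B), (0, b)} = (zmultiples a).prod (zmultiples b) := by
  apply le_antisymm
  · rw [closure_le]
    rintro x (rfl | rfl)
    · exact ⟨mem_zmultiples a, zero_mem _⟩
    · exact ⟨zero_mem _, mem_zmultiples b⟩
  · rintro ⟨x, y⟩ ⟨hx, hy⟩
    obtain ⟨m, rfl⟩ := mem_zmultiples_iff.1 hx
    obtain ⟨l, rfl⟩ := mem_zmultiples_iff.1 hy
    have : ((m • a, l • b) : A × B) = m • ((a, 0) : A × B) + l • ((0, b) : A × B) := by
      simp [Prod.ext_iff]
    rw [this]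
    exact add_mem (zsmul_mem (subset_closure (by simp)) m)
      (zsmul_mem (subset_closure (by simp)) l)

open AddSubgroup in
theorem stmt_15 (n p : ℕ) (hn : 0 < n) (hp : p.Prime) (hpn : p ∣ n)
    (u v : ZMod n × ZMod n) (hu : u ∈ Gnp n p) (hv : v ∈ Gnp n p) (huv : u ≠ v) :
    AddSubgroup.closure {u, v} =
      AddSubgroup.closure {(((n / p : ℕ) : ZMod n), (0 : ZMod n)),
        ((0 : ZMod n), ((n / p : ℕ) : ZMod n))} ∧
    Nat.card (AddSubgroup.closure {u, v} : AddSubgroup (ZMod n × ZMod n)) = p ^ 2 := by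
  set k : ZMod n := ((n / p : ℕ) : ZMod n) with hk
  have hord : addOrderOf k = p := by
    rw [hk, ZMod.addOrderOf_coe _ hn.ne', Nat.gcd_eq_right (Nat.div_dvd_of_dvd hpn),
      Nat.div_div_self hpn hn.ne']
  have hpk : (p : ℤ) • k = 0 := by
    have := addOrderOf_nsmul_eq_zero k
    rw [hord] at this
    simpa using this
  have hcast : ∀ i : ℕ, ((i * (n / p) : ℕ) : ZMod n) = (i : ℤ) • k := by
    intro i
    rw [hk]
    push_cast
    rw [zsmul_eq_mul]
    push_cast
    ring
  -- key: from u, v in any subgroup C we get the two generators in C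
  have key : ∀ C : AddSubgroup (ZMod n × ZMod n), u ∈ C → v ∈ C →
      ((k, 0) : ZMod n × ZMod n) ∈ C ∧ ((0, k) : ZMod n × ZMod n) ∈ C := by
    intro C hucl hvcl
    have main : ((0, k) : ZMod n × ZMod n) ∈ C ∧
        ∃ i : ℕ, ((k, (i : ℤ) • k) : ZMod n × ZMod n) ∈ C := by
      rcases hu with rfl | ⟨i, hi, rfl⟩
      · rcases hv with rfl | ⟨j, hj, rfl⟩
        · exact absurd rfl huv
        · rw [hcast j] at hvcl
          exact ⟨hucl, j, hvcl⟩
      · rcases hv with rfl | ⟨j, hj, rfl⟩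
        · rw [hcast i] at hucl
          exact ⟨hvcl, i, hucl⟩
        · have hij : i ≠ j := fun h => huv (by rw [h])
          rw [hcast i] at hucl
          rw [hcast j] at hvcl
          have hnd : ¬ (p : ℤ) ∣ ((i : ℤ) - j) := by
            intro hd
            have h0 : (i : ℤ) - j = 0 := Int.eq_zero_of_abs_lt_dvd hd (by
              rw [abs_sub_lt_iff]
              omega)
            exact hij (by omega)
          have hcop : IsCoprime (p : ℤ) ((i : ℤ) - j) :=
            (Int.prime_iff_natAbs_prime.2 (by simpa using hp)).coprime_iff_not_dvd.2 hnd
          obtain ⟨t, s, hts⟩ := hcop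
          have hd : ((k, (i : ℤ) • k) : ZMod n × ZMod n) - (k, (j : ℤ) • k)
              = ((0, ((i : ℤ) - j) • k) : ZMod n × ZMod n) := by
            rw [Prod.mk_sub_mk, sub_self, sub_zsmul]
            simp [sub_eq_add_neg]
          have hdm : ((0, ((i : ℤ) - j) • k) : ZMod n × ZMod n) ∈ C := by
            rw [← hd]; exact sub_mem hucl hvcl
          have h1 : s • (((i : ℤ) - j) • k) = k := by
            rw [smul_smul]
            have he : s * ((i : ℤ) - j) = 1 - t * p := by linarith
            rw [he, sub_zsmul, one_zsmul, mul_zsmul, hpk, smul_zero]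
            simp
          have h0k : ((0, k) : ZMod n × ZMod n) ∈ C := by
            have : s • ((0, ((i : ℤ) - j) • k) : ZMod n × ZMod n) = ((0, k) : ZMod n × ZMod n) := by
              rw [Prod.smul_mk, smul_zero, h1]
            rw [← this]
            exact zsmul_mem hdm s
          exact ⟨h0k, i, hucl⟩
    obtain ⟨h0k, i, hik⟩ := main
    refine ⟨?_, h0k⟩
    have : ((k, 0) : ZMod n × ZMod n) = (k, (i : ℤ) • k) - (i : ℤ) • ((0, k) : ZMod n × ZMod n) := by
      rw [Prod.smul_mk, Prod.mk_sub_mk, smul_zero, sub_zero, sub_self]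
    rw [this]
    exact sub_mem hik (zsmul_mem h0k _)
  have hclos : AddSubgroup.closure {u, v}
      = AddSubgroup.closure {((k, 0) : ZMod n × ZMod n), (0, k)} := by
    apply le_antisymm
    · rw [closure_le]
      have hmem : ∀ w ∈ Gnp n p, w ∈ AddSubgroup.closure {((k, 0) : ZMod n × ZMod n), (0, k)} := by
        rintro w (rfl | ⟨i, hi, rfl⟩)
        · exact subset_closure (by simp [hk])
        · have : ((k, ((i * (n / p) : ℕ) : ZMod n)) : ZMod n × ZMod n)
              = (k, 0) + (i : ℤ) • ((0, k) : ZMod n × ZMod n) := by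
            rw [hcast i, Prod.smul_mk, Prod.mk_add_mk, smul_zero, add_zero, zero_add]
          rw [this]
          exact add_mem (subset_closure (by simp)) (zsmul_mem (subset_closure (by simp)) _)
      rintro x (rfl | rfl)
      · exact hmem _ hu
      · exact hmem _ hv
    · obtain ⟨hk0, h0k⟩ := key (AddSubgroup.closure {u, v})
        (subset_closure (by simp)) (subset_closure (by simp))
      rw [closure_le]
      rintro x (rfl | rfl)
      · exact hk0
      · exact h0k
  constructor
  · rw [hclos]
  · rw [hclos, closure_pair_prod, Nat.card_congr (AddSubgroup.prodEquiv _ _).toEquiv,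
      Nat.card_prod, Nat.card_zmultiples, hord, sq]
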